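/- Eigenvector restriction under isospectral reduction: if Au = λ₀u and λ₀ is not an eigenvalue of the block F = A_{S̄,S̄}, then R(λ₀, S, A)·u_S = λ₀·u_S, where u_S is the restriction of u to the coordinates in S. -/

import Mathlib

open Matrix

/-- Isospectral reduction of a matrix indexed by `α ⊕ β` down to `α`. -/
noncomputable def red {α β : Type} [Fintype α] [Fintype β] [DecidableEq α] [DecidableEq β]
    (lam : ℂ) (A : Matrix (α ⊕ β) (α ⊕ β) ℂ) : Matrix α α ℂ :=
  A.toBlocks₁₁ + A.toBlocks₁₂ * (lam • (1 : Matrix β β ℂ) - A.toBlocks₂₂)⁻¹ * A.toBlocks₂₁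

theorem stmt_2 (s r : ℕ)
    (A : Matrix (Fin s ⊕ Fin r) (Fin s ⊕ Fin r) ℂ)
    (lam₀ : ℂ) (u : (Fin s ⊕ Fin r) → ℂ)
    (hu : A.mulVec u = lam₀ • u)
    (hF : IsUnit (lam₀ • (1 : Matrix (Fin r) (Fin r) ℂ) - A.toBlocks₂₂).det) :
    (red lam₀ A).mulVec (u ∘ Sum.inl) = lam₀ • (u ∘ Sum.inl) := by
  set u₁ := u ∘ Sum.inl
  set u₂ := u ∘ Sum.inr
  set M := lam₀ • (1 : Matrix (Fin r) (Fin r) ℂ) - A.toBlocks₂₂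
  have hA : A = fromBlocks A.toBlocks₁₁ A.toBlocks₁₂ A.toBlocks₂₁ A.toBlocks₂₂ :=
    (fromBlocks_toBlocks A).symm
  rw [hA, fromBlocks_mulVec] at hu
  have h1 : A.toBlocks₁₁ *ᵥ u₁ + A.toBlocks₁₂ *ᵥ u₂ = lam₀ • u₁ := by
    funext i
    have := congrFun hu (Sum.inl i)
    simpa [u₁, u₂] using this
  have h2 : A.toBlocks₂₁ *ᵥ u₁ + A.toBlocks₂₂ *ᵥ u₂ = lam₀ • u₂ := by
    funext i
    have := congrFun hu (Sum.inr i)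
    simpa [u₁, u₂] using this
  have hM : M *ᵥ u₂ = A.toBlocks₂₁ *ᵥ u₁ := by
    have : A.toBlocks₂₂ *ᵥ u₂ = lam₀ • u₂ - A.toBlocks₂₁ *ᵥ u₁ := by
      rw [← h2]; abel
    simp [M, sub_mulVec, smul_mulVec, this]
  have hu₂ : u₂ = M⁻¹ *ᵥ (A.toBlocks₂₁ *ᵥ u₁) := by
    rw [← hM, mulVec_mulVec, nonsing_inv_mul M hF, one_mulVec]
  calc (red lam₀ A) *ᵥ u₁
      = A.toBlocks₁₁ *ᵥ u₁ + A.toBlocks₁₂ *ᵥ (M⁻¹ *ᵥ (A.toBlocks₂₁ *ᵥ u₁)) := by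
        simp [red, add_mulVec, Matrix.mul_assoc, mulVec_mulVec, M]
    _ = A.toBlocks₁₁ *ᵥ u₁ + A.toBlocks₁₂ *ᵥ u₂ := by rw [← hu₂]
    _ = lam₀ • u₁ := h1
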